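/- Let M = (1+ε)n/2 be an integer with ε = ε(n) → 0 as n → ∞, let ε̂ := max{|ε|, e·n^{−1/2}}, and define the event 𝒜(b) := {U_{t+1} ≥ 2^{−5}·U_t for all t ≤ b such that U_t > 2^{−5}·ε̂·n}. If b ≤ e^{2^{−19}·ε̂·n}, then for all sufficiently large n, P(𝒜(b)ᶜ) ≤ exp(−2^{−19}·ε̂·n); in particular P(𝒜(b)ᶜ) = exp(−Ω(n^{1/2})). -/

import Mathlib

open MeasureTheory ProbabilityTheory Filter Real Topology
open scoped ENNReal

namespace Dispersion

open Finset

/-- The uniform distribution on the `n` vertices `{0, …, n-1}`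
(a junk Dirac measure at `0` if `n = 0`). -/
noncomputable def moveDist (n : ℕ) : Measure ℕ :=
  if h : 0 < n then
    (PMF.uniformOfFinset (Finset.range n) (Finset.nonempty_range_iff.mpr h.ne')).toMeasure
  else Measure.dirac 0

/-- `IsDriver n μ G` says that the family `G (t, i)` of random destinations (of particle `i`
for the step from time `t` to time `t+1`) consists of independent random variables, each
uniformly distributed on the `n` vertices, on the probability space `(Ωs, μ)`.  Together
with `pos` below this encodes the dispersion process on the complete graph `K_n`
(with loops) with `M` particles. -/
structure IsDriver {Ωs : Type} [MeasurableSpace Ωs] (n : ℕ) (μ : Measure Ωs)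
    (G : ℕ × ℕ → Ωs → ℕ) : Prop where
  isProb : IsProbabilityMeasure μ
  meas : ∀ p, Measurable (G p)
  unif : ∀ p, μ.map (G p) = moveDist n
  indep : iIndepFun G μ

open Classical in
/-- The position of particle `i` (for `i < M`) at time `t` in the dispersion process:
all particles start on vertex `0`; a particle that is happy (alone on its vertex) stays
put, and an unhappy particle moves to the random destination prescribed by the driver. -/
noncomputable def pos {Ωs : Type} (M : ℕ) (G : ℕ × ℕ → Ωs → ℕ) (ω : Ωs) : ℕ → ℕ → ℕ
  | 0, _ => 0
  | t + 1, i =>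
    if ∀ j, j < M → j ≠ i → pos M G ω t j ≠ pos M G ω t i then pos M G ω t i
    else G (t, i) ω

open Classical in
/-- `U M G ω t` : the number of unhappy particles at time `t`. -/
noncomputable def U {Ωs : Type} (M : ℕ) (G : ℕ × ℕ → Ωs → ℕ) (ω : Ωs) (t : ℕ) : ℕ :=
  ((Finset.range M).filter
    (fun i => ∃ j, j < M ∧ j ≠ i ∧ pos M G ω t j = pos M G ω t i)).card

/-- The dispersion time `T_{n,M}`, as an element of `ℕ∞`. -/
noncomputable def T {Ωs : Type} (M : ℕ) (G : ℕ × ℕ → Ωs → ℕ) (ω : Ωs) : ℕ∞ :=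
  sInf {m : ℕ∞ | ∃ t : ℕ, m = (t : ℕ∞) ∧ U M G ω t = 0}

/-- The event `{T_{n,M} > r}` for a real threshold `r`. -/
def dispGT {Ωs : Type} (M : ℕ) (G : ℕ × ℕ → Ωs → ℕ) (r : ℝ) : Set Ωs :=
  {ω | ∀ t : ℕ, U M G ω t = 0 → r < (t : ℝ)}

/-- The event `{T_{n,M} ≤ r}` for a real threshold `r`. -/
def dispLE {Ωs : Type} (M : ℕ) (G : ℕ × ℕ → Ωs → ℕ) (r : ℝ) : Set Ωs :=
  {ω | ∃ t : ℕ, (t : ℝ) ≤ r ∧ U M G ω t = 0}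

/-- The event `{T_{n,M} < r}` for a real threshold `r`. -/
def dispLT {Ωs : Type} (M : ℕ) (G : ℕ × ℕ → Ωs → ℕ) (r : ℝ) : Set Ωs :=
  {ω | ∃ t : ℕ, (t : ℝ) < r ∧ U M G ω t = 0}

/-- `ε̂ = max {|ε|, e·n^{-1/2}}`. -/
noncomputable def ehat (n : ℕ) (e : ℝ) : ℝ :=
  max |e| (Real.exp 1 * (n : ℝ) ^ (-(1 / 2 : ℝ)))

/-- deterministic version of `pos` -/
noncomputable def dpos (M : ℕ) (g : ℕ × ℕ → ℕ) : ℕ → ℕ → ℕ :=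
  pos M (fun p (_ : Unit) => g p) ()

noncomputable def dU (M : ℕ) (g : ℕ × ℕ → ℕ) (t : ℕ) : ℕ :=
  U M (fun p (_ : Unit) => g p) () t

lemma pos_eq_dpos {Ωs : Type} (M : ℕ) (G : ℕ × ℕ → Ωs → ℕ) (ω : Ωs) (t i : ℕ) :
    pos M G ω t i = dpos M (fun p => G p ω) t i := by
  induction t generalizing i with
  | zero => simp [pos, dpos]
  | succ t ih =>
    simp only [pos, dpos] at ih ⊢
    simp only [ih]

lemma U_eq_dU {Ωs : Type} (M : ℕ) (G : ℕ × ℕ → Ωs → ℕ) (ω : Ωs) (t : ℕ) :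
    U M G ω t = dU M (fun p => G p ω) t := by
  unfold U dU U
  congr 1
  apply Finset.filter_congr
  intro i _
  have hp : ∀ j, pos M G ω t j = pos M (fun p (_ : Unit) => G p ω) () t j := by
    intro j; rw [pos_eq_dpos]; rfl
  simp only [hp]

/-- locality: `dpos` at time `t` only depends on coordinates `(s, j)` with `s < t`, `j < M`. -/
lemma dpos_congr (M : ℕ) (g g' : ℕ × ℕ → ℕ) (t : ℕ)
    (h : ∀ s j, s < t → j < M → g (s, j) = g' (s, j)) :
    ∀ i, i < M → dpos M g t i = dpos M g' t i := by
  induction t with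
  | zero => intro i _; simp [dpos, pos]
  | succ t ih =>
    intro i hi
    have ih' : ∀ j, j < M → dpos M g t j = dpos M g' t j :=
      ih (fun s j hs hj => h s j (hs.trans (Nat.lt_succ_self t)) hj)
    simp only [dpos, pos] at ih' ⊢
    have hcond : (∀ j, j < M → j ≠ i → pos M (fun p _ => g p) () t j ≠ pos M (fun p _ => g p) () t i)
        ↔ (∀ j, j < M → j ≠ i → pos M (fun p _ => g' p) () t j ≠ pos M (fun p _ => g' p) () t i) := by
      constructor <;> intro hC j hj hne <;>
        [rw [← ih' j hj, ← ih' i hi]; rw [ih' j hj, ih' i hi]] <;> exact hC j hj hne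
    by_cases hc : ∀ j, j < M → j ≠ i → pos M (fun p _ => g p) () t j ≠ pos M (fun p _ => g p) () t i
    · rw [if_pos hc, if_pos (hcond.mp hc), ih' i hi]
    · rw [if_neg hc, if_neg (fun hc' => hc (hcond.mpr hc')), h t i (Nat.lt_succ_self t) hi]

lemma dU_congr (M : ℕ) (g g' : ℕ × ℕ → ℕ) (t : ℕ)
    (h : ∀ s j, s < t → j < M → g (s, j) = g' (s, j)) :
    dU M g t = dU M g' t := by
  unfold dU U
  congr 1
  apply Finset.filter_congr
  intro i hi
  simp only [Finset.mem_range] at hi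
  have hp := dpos_congr M g g' t h
  simp only [dpos] at hp
  constructor <;> rintro ⟨j, hj, hne, he⟩ <;> refine ⟨j, hj, hne, ?_⟩
  · rw [← hp j hj, ← hp i hi]; exact he
  · rw [hp j hj, hp i hi]; exact he

lemma dpos_lt (n M : ℕ) (hn : 0 < n) (g : ℕ × ℕ → ℕ) (t : ℕ)
    (hg : ∀ s j, s < t → j < M → g (s, j) < n) :
    ∀ i, i < M → dpos M g t i < n := by
  induction t with
  | zero => intro i _; simpa [dpos, pos] using hn
  | succ t ih =>
    intro i hi
    have ih' := ih (fun s j hs hj => hg s j (hs.trans (Nat.lt_succ_self t)) hj)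
    simp only [dpos, pos] at ih' ⊢
    split
    · exact ih' i hi
    · exact hg t i (Nat.lt_succ_self t) hi

open Finset in
/-- Chernoff bound, counting version: among tuples `y : Fin M → [n]` which agree with `r`
on `S1`, the number of those for which fewer than `k` coordinates in `S2` land in `V`
is at most `exp k * (n - (1-e⁻¹)|V|)^|S2| * n^(M - |S1| - |S2|)`. -/
lemma chern (n M : ℕ) (S1 S2 : Finset (Fin M)) (hd : Disjoint S1 S2) (r : Fin M → ℕ)
    (V : Finset ℕ) (hV : V ⊆ Finset.range n) (k : ℝ) :
    (((Fintype.piFinset (fun _ : Fin M => Finset.range n)).filter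
       (fun y => (∀ i ∈ S1, y i = r i) ∧ (((S2.filter (fun i => y i ∈ V)).card : ℝ) < k))).card : ℝ)
    ≤ Real.exp k * ((n : ℝ) - (1 - Real.exp (-1)) * V.card) ^ S2.card
        * (n : ℝ) ^ ((Finset.univ \ (S1 ∪ S2)).card) := by
  classical
  set piF := Fintype.piFinset (fun _ : Fin M => Finset.range n) with hpiF
  set f : Fin M → ℕ → ℝ := fun i a =>
    if i ∈ S1 then (if a = r i then 1 else 0)
    else if i ∈ S2 then Real.exp (-(if a ∈ V then 1 else 0)) else 1 with hf
  have hf_nonneg : ∀ i a, 0 ≤ f i a := by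
    intro i a
    simp only [hf]
    split
    · split <;> norm_num
    · split
      · positivity
      · norm_num
  have key : ∀ y ∈ piF.filter
      (fun y => (∀ i ∈ S1, y i = r i) ∧ (((S2.filter (fun i => y i ∈ V)).card : ℝ) < k)),
      (1 : ℝ) ≤ Real.exp k * ∏ i, f i (y i) := by
    intro y hy
    rw [Finset.mem_filter] at hy
    obtain ⟨hy0, hy1, hy2⟩ := hy
    have hsplit : ∏ i, f i (y i) =
        Real.exp (-((S2.filter (fun i => y i ∈ V)).card : ℝ)) := by
      have : ∏ i, f i (y i) = ∏ i ∈ S2, Real.exp (-(if y i ∈ V then (1:ℝ) else 0)) := by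
        rw [← Finset.prod_subset (Finset.subset_univ S2)]
        · apply Finset.prod_congr rfl
          intro i hi
          have hiS1 : i ∉ S1 := fun h => (Finset.disjoint_left.mp hd) h hi
          simp [hf, hiS1, hi]
        · intro i _ hiS2
          by_cases hiS1 : i ∈ S1
          · simp [hf, hiS1, hy1 i hiS1]
          · simp [hf, hiS1, hiS2]
      rw [this, ← Real.exp_sum]
      congr 1
      rw [Finset.card_filter]
      push_cast
      rw [← Finset.sum_neg_distrib]
    rw [hsplit, ← Real.exp_add]
    have : (0:ℝ) ≤ k + -((S2.filter (fun i => y i ∈ V)).card : ℝ) := by linarith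
    calc (1:ℝ) = Real.exp 0 := by simp
    _ ≤ _ := Real.exp_le_exp.mpr this
  have step1 : (((piF.filter
       (fun y => (∀ i ∈ S1, y i = r i) ∧ (((S2.filter (fun i => y i ∈ V)).card : ℝ) < k))).card : ℝ))
      ≤ Real.exp k * ∑ y ∈ piF, ∏ i, f i (y i) := by
    rw [Finset.mul_sum]
    calc ((piF.filter _).card : ℝ)
        = ∑ _y ∈ piF.filter (fun y => (∀ i ∈ S1, y i = r i) ∧
            (((S2.filter (fun i => y i ∈ V)).card : ℝ) < k)), (1:ℝ) := by simp
      _ ≤ ∑ y ∈ piF.filter (fun y => (∀ i ∈ S1, y i = r i) ∧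
            (((S2.filter (fun i => y i ∈ V)).card : ℝ) < k)),
            Real.exp k * ∏ i, f i (y i) := Finset.sum_le_sum key
      _ ≤ ∑ y ∈ piF, Real.exp k * ∏ i, f i (y i) := by
          apply Finset.sum_le_sum_of_subset_of_nonneg (Finset.filter_subset _ _)
          intro y _ _
          have : 0 ≤ ∏ i, f i (y i) := Finset.prod_nonneg (fun i _ => hf_nonneg i (y i))
          positivity
  have step2 : ∑ y ∈ piF, ∏ i, f i (y i) = ∏ i, ∑ a ∈ Finset.range n, f i a :=
    Finset.sum_prod_piFinset _ _
  set g : Fin M → ℝ := fun i =>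
    if i ∈ S1 then 1 else if i ∈ S2 then ((n : ℝ) - (1 - Real.exp (-1)) * V.card) else n with hg
  have hVcard : (V.card : ℝ) ≤ n := by
    exact_mod_cast (Finset.card_le_card hV).trans_eq (Finset.card_range n)
  have hg_nonneg : ∀ i, 0 ≤ g i := by
    intro i
    simp only [hg]
    split
    · norm_num
    · split
      · nlinarith [Real.exp_pos (-1:ℝ), Real.exp_lt_one_iff.mpr (by norm_num : (-1:ℝ) < 0),
          (Nat.cast_nonneg V.card : (0:ℝ) ≤ V.card) ]
      · positivity
  have term_bound : ∀ i, ∑ a ∈ Finset.range n, f i a ≤ g i := by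
    intro i
    by_cases h1 : i ∈ S1
    · simp only [hf, hg, h1, if_true]
      rw [Finset.sum_ite_eq' (Finset.range n) (r i) (fun _ => (1:ℝ))]
      split <;> norm_num
    · by_cases h2 : i ∈ S2
      · simp only [hf, hg, h1, h2, if_false, if_true]
        have hrw : ∀ a : ℕ, Real.exp (-(if a ∈ V then (1:ℝ) else 0))
            = if a ∈ V then Real.exp (-1) else 1 := by
          intro a; split <;> simp
        have hfil : (Finset.range n).filter (fun a => a ∈ V) = V := by
          ext a
          simp only [Finset.mem_filter]
          exact ⟨fun h => h.2, fun h => ⟨hV h, h⟩⟩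
        have hfil2 : (Finset.range n).filter (fun a => ¬ a ∈ V) = Finset.range n \ V := by
          ext a
          simp [Finset.mem_sdiff]
        rw [Finset.sum_congr rfl (fun a _ => hrw a),
          ← Finset.sum_filter_add_sum_filter_not (Finset.range n) (fun a => a ∈ V), hfil, hfil2]
        have e1 : (∑ x ∈ V, if x ∈ V then Real.exp (-1) else 1) = V.card * Real.exp (-1) := by
          rw [Finset.sum_congr rfl (fun a ha => if_pos ha), Finset.sum_const, nsmul_eq_mul]
        have e2 : (∑ x ∈ Finset.range n \ V, if x ∈ V then Real.exp (-1) else 1)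
            = ((n : ℝ) - V.card) := by
          rw [Finset.sum_congr rfl (fun a ha => if_neg (Finset.mem_sdiff.mp ha).2),
            Finset.sum_const, Finset.card_sdiff_of_subset hV, Finset.card_range, nsmul_eq_mul, mul_one]
          exact Nat.cast_sub ((Finset.card_le_card hV).trans_eq (Finset.card_range n))
        rw [e1, e2]
        linarith [(by ring : (V.card:ℝ) * Real.exp (-1) + ((n:ℝ) - V.card)
          = (n:ℝ) - (1 - Real.exp (-1)) * V.card)]
      · simp only [hf, hg, h1, h2, if_false]
        rw [Finset.sum_const, Finset.card_range]
        simp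
  have sum_nonneg' : ∀ i, (0:ℝ) ≤ ∑ a ∈ Finset.range n, f i a := by
    intro i
    exact Finset.sum_nonneg (fun a _ => hf_nonneg i a)
  have step3 : ∏ i, ∑ a ∈ Finset.range n, f i a ≤ ∏ i, g i :=
    Finset.prod_le_prod (fun i _ => sum_nonneg' i) (fun i _ => term_bound i)
  have prodg : ∏ i, g i = ((n : ℝ) - (1 - Real.exp (-1)) * V.card) ^ S2.card
      * (n : ℝ) ^ ((Finset.univ \ (S1 ∪ S2)).card) := by
    rw [← Finset.prod_sdiff (Finset.subset_univ (S1 ∪ S2)), Finset.prod_union hd]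
    have h1 : ∏ i ∈ S1, g i = 1 := by
      apply Finset.prod_eq_one
      intro i hi; simp [hg, hi]
    have h2 : ∏ i ∈ S2, g i = ((n : ℝ) - (1 - Real.exp (-1)) * V.card) ^ S2.card := by
      rw [Finset.prod_congr rfl (fun i hi => ?_), Finset.prod_const]
      have hi1 : i ∉ S1 := fun h => (Finset.disjoint_left.mp hd) h hi
      simp [hg, hi1, hi]
    have h3 : ∏ i ∈ Finset.univ \ (S1 ∪ S2), g i
        = (n : ℝ) ^ ((Finset.univ \ (S1 ∪ S2)).card) := by
      rw [Finset.prod_congr rfl (fun i hi => ?_), Finset.prod_const]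
      rw [Finset.mem_sdiff, Finset.mem_union] at hi
      simp only [hg]
      rw [if_neg (fun h => hi.2 (Or.inl h)), if_neg (fun h => hi.2 (Or.inr h))]
    rw [h1, h2, h3]
    ring
  calc (((piF.filter (fun y => (∀ i ∈ S1, y i = r i) ∧
        (((S2.filter (fun i => y i ∈ V)).card : ℝ) < k))).card : ℝ))
      ≤ Real.exp k * ∑ y ∈ piF, ∏ i, f i (y i) := step1
    _ = Real.exp k * ∏ i, ∑ a ∈ Finset.range n, f i a := by rw [step2]
    _ ≤ Real.exp k * ∏ i, g i :=
        mul_le_mul_of_nonneg_left step3 (Real.exp_pos k).le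
    _ = _ := by rw [prodg]; ring


open Classical in
/-- the set of unhappy particles in configuration `c` -/
noncomputable def Sfin {M : ℕ} (c : Fin M → ℕ) : Finset (Fin M) :=
  univ.filter (fun i => ∃ j, j ≠ i ∧ c j = c i)

open Classical in
/-- new position after one move: happy particles stay, unhappy ones jump to `y i` -/
noncomputable def newposF {M : ℕ} (c y : Fin M → ℕ) (i : Fin M) : ℕ :=
  if ∀ j, j ≠ i → c j ≠ c i then c i else y i

open Classical in
noncomputable def newUF {M : ℕ} (c y : Fin M → ℕ) : ℕ :=
  (univ.filter (fun i => ∃ j, j ≠ i ∧ newposF c y j = newposF c y i)).card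

lemma newposF_of_unhappy {M : ℕ} {c : Fin M → ℕ} (y : Fin M → ℕ) {i : Fin M}
    (hi : i ∈ Sfin c) : newposF c y i = y i := by
  classical
  simp only [Sfin, mem_filter, mem_univ, true_and] at hi
  obtain ⟨j, hj1, hj2⟩ := hi
  exact if_neg (fun h => h j hj1 hj2)

lemma newposF_of_happy {M : ℕ} {c : Fin M → ℕ} (y : Fin M → ℕ) {i : Fin M}
    (hi : i ∉ Sfin c) : newposF c y i = c i := by
  classical
  simp only [Sfin, mem_filter, mem_univ, true_and, not_exists] at hi
  exact if_pos (fun j hj => by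
    intro he
    exact hi j ⟨hj, he⟩)

lemma newUF_ge {M : ℕ} (c y : Fin M → ℕ) (T : Finset (Fin M))
    (hT : ∀ i ∈ T, ∃ j, j ≠ i ∧ newposF c y j = newposF c y i) :
    T.card ≤ newUF c y := by
  classical
  apply Finset.card_le_card
  intro i hi
  simp only [newUF, mem_filter, mem_univ, true_and]
  · exact hT i hi

set_option maxHeartbeats 1000000 in
open Classical in
lemma config_count (n M : ℕ) (hn75 : 75 ≤ n) (c : Fin M → ℕ) (hc : ∀ i, c i < n)
    (hM1 : (49 : ℝ) * n ≤ 100 * M) (hMn : M ≤ n) :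
    (((Fintype.piFinset (fun _ : Fin M => Finset.range n)).filter
        (fun y => (newUF c y : ℝ) < (2:ℝ) ^ (-5 : ℤ) * (Sfin c).card)).card : ℝ)
      ≤ 2 * Real.exp (-((Sfin c).card : ℝ) / 512) * (n : ℝ) ^ M := by
  classical
  have hn : 0 < n := by omega
  set u : ℕ := (Sfin c).card with hu
  set k : ℝ := (2:ℝ) ^ (-5 : ℤ) * u with hk
  have hk32 : k = u / 32 := by rw [hk]; norm_num; ring
  have huM : u ≤ M := by
    calc u ≤ (univ : Finset (Fin M)).card := Finset.card_le_card (Finset.filter_subset _ _)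
    _ = M := by simp
  have hexpinv : Real.exp (-1) ≤ 3/8 := by
    rw [Real.exp_neg]
    rw [inv_le_comm₀ (Real.exp_pos 1) (by norm_num)]
    calc ((3:ℝ)/8)⁻¹ = 8/3 := by norm_num
    _ ≤ 2.7182818283 := by norm_num
    _ ≤ Real.exp 1 := Real.exp_one_gt_d9.le
  have hexpinv' : (5:ℝ)/8 ≤ 1 - Real.exp (-1) := by linarith
  have hexpinv'' : 0 ≤ 1 - Real.exp (-1) := by linarith
  have hepos : 1 - Real.exp (-1) ≤ 1 := by nlinarith [Real.exp_pos (-1 : ℝ)]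
  set piF := Fintype.piFinset (fun _ : Fin M => Finset.range n) with hpiF
  by_cases hcase : (n : ℝ) ≤ 4 * ((M : ℝ) - u)
  · -- Case A: many happy particles
    set W := ((univ : Finset (Fin M)) \ Sfin c).image c with hW
    have hWsub : W ⊆ Finset.range n := by
      intro a ha
      rw [hW, Finset.mem_image] at ha
      obtain ⟨j, _, hj⟩ := ha
      rw [Finset.mem_range, ← hj]
      exact hc j
    have hinj : Set.InjOn c ((univ : Finset (Fin M)) \ Sfin c : Finset (Fin M)) := by
      intro i hi j hj he
      by_contra hne
      rw [Finset.mem_coe, Finset.mem_sdiff] at hi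
      apply hi.2
      rw [Sfin, Finset.mem_filter]
      exact ⟨Finset.mem_univ i, j, fun h => hne h.symm, he.symm⟩
    have hWcard : (W.card : ℝ) = (M : ℝ) - u := by
      rw [hW, Finset.card_image_of_injOn hinj,
        Finset.card_sdiff_of_subset (Finset.subset_univ _), Finset.card_univ, Fintype.card_fin,
        Nat.cast_sub huM]
    have hsub : piF.filter (fun y => (newUF c y : ℝ) < (2:ℝ) ^ (-5 : ℤ) * (Sfin c).card) ⊆
        piF.filter (fun y => (∀ i ∈ (∅ : Finset (Fin M)), y i = (fun _ : Fin M => 0) i) ∧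
          ((((Sfin c).filter (fun i => y i ∈ W)).card : ℝ) < k)) := by
      intro y hy
      rw [Finset.mem_filter] at hy ⊢
      refine ⟨hy.1, by simp, lt_of_le_of_lt ?_ hy.2⟩
      have hle : (((Sfin c).filter (fun i => y i ∈ W)).card) ≤ newUF c y := by
        apply newUF_ge
        intro i hi
        rw [Finset.mem_filter] at hi
        obtain ⟨hiS, hiW⟩ := hi
        rw [hW, Finset.mem_image] at hiW
        obtain ⟨j, hjH, hjc⟩ := hiW
        have hjS : j ∉ Sfin c := (Finset.mem_sdiff.mp hjH).2
        refine ⟨j, fun he => hjS (he ▸ hiS), ?_⟩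
        rw [newposF_of_happy y hjS, newposF_of_unhappy y hiS, hjc]
      exact_mod_cast hle
    have hch := chern n M ∅ (Sfin c) (by simp) (fun _ => 0) W hWsub k
    have hcards : ((piF.filter
        (fun y => (newUF c y : ℝ) < (2:ℝ) ^ (-5 : ℤ) * (Sfin c).card)).card : ℝ)
        ≤ Real.exp k * ((n : ℝ) - (1 - Real.exp (-1)) * W.card) ^ (Sfin c).card
          * (n : ℝ) ^ ((univ \ (∅ ∪ Sfin c)).card) := by
      refine le_trans ?_ hch
      exact_mod_cast Finset.card_le_card hsub
    have hexp1 : (univ \ ((∅ : Finset (Fin M)) ∪ Sfin c)).card = M - u := by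
      rw [Finset.empty_union, Finset.card_sdiff_of_subset (Finset.subset_univ _), Finset.card_univ,
        Fintype.card_fin]
    have hbase0 : (0:ℝ) ≤ (n : ℝ) - (1 - Real.exp (-1)) * W.card := by
      have h1 : (W.card : ℝ) ≤ n := by
        exact_mod_cast (Finset.card_le_card hWsub).trans_eq (Finset.card_range n)
      nlinarith [(Nat.cast_nonneg W.card : (0:ℝ) ≤ (W.card:ℝ))]
    have hbase : (n : ℝ) - (1 - Real.exp (-1)) * W.card ≤ 27/32 * n := by
      rw [hWcard]
      nlinarith
    calc ((piF.filter (fun y => (newUF c y : ℝ) < (2:ℝ) ^ (-5 : ℤ) * (Sfin c).card)).card : ℝ)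
        ≤ Real.exp k * ((n : ℝ) - (1 - Real.exp (-1)) * W.card) ^ u * (n : ℝ) ^ (M - u) := by
          rw [← hexp1, ← hu]; exact hcards
      _ ≤ Real.exp k * (27/32 * (n:ℝ)) ^ u * (n : ℝ) ^ (M - u) := by
          have h1 := pow_le_pow_left₀ hbase0 hbase u
          have h2 : (0:ℝ) ≤ (n : ℝ) ^ (M - u) := by positivity
          exact mul_le_mul_of_nonneg_right
            (mul_le_mul_of_nonneg_left h1 (Real.exp_pos k).le) h2
      _ = Real.exp k * (27/32 : ℝ) ^ u * ((n:ℝ) ^ u * (n : ℝ) ^ (M - u)) := by ring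
      _ = Real.exp k * (27/32 : ℝ) ^ u * (n:ℝ) ^ M := by
          rw [← pow_add, Nat.add_sub_cancel' huM]
      _ ≤ Real.exp k * Real.exp (-(17/512) * u) * (n:ℝ) ^ M := by
          have h1 : (27/32 : ℝ) ≤ Real.exp (-(17/512)) := by
            have := Real.add_one_le_exp (-(17/512) : ℝ)
            linarith
          have h2 : (27/32 : ℝ) ^ u ≤ Real.exp (-(17/512) * u) := by
            calc (27/32 : ℝ) ^ u ≤ Real.exp (-(17/512)) ^ u := pow_le_pow_left₀ (by norm_num) h1 u
            _ = Real.exp ((u:ℝ) * (-(17/512))) := by rw [← Real.exp_nat_mul]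
            _ = Real.exp (-(17/512) * u) := by rw [mul_comm]
          have h4 : (0:ℝ) ≤ (n:ℝ) ^ M := by positivity
          exact mul_le_mul_of_nonneg_right
            (mul_le_mul_of_nonneg_left h2 (Real.exp_pos k).le) h4
      _ ≤ 2 * Real.exp (-(u:ℝ) / 512) * (n : ℝ) ^ M := by
          rw [← Real.exp_add, hk32]
          have h5 : Real.exp ((u:ℝ)/32 + -(17/512) * u) ≤ Real.exp (-(u:ℝ)/512) := by
            apply Real.exp_le_exp.mpr
            have : (0:ℝ) ≤ u := Nat.cast_nonneg u
            linarith
          have h4 : (0:ℝ) ≤ (n:ℝ) ^ M := by positivity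
          calc Real.exp ((u:ℝ)/32 + -(17/512) * u) * (n:ℝ) ^ M
              ≤ Real.exp (-(u:ℝ)/512) * (n:ℝ) ^ M := mul_le_mul_of_nonneg_right h5 h4
            _ ≤ 2 * Real.exp (-(u:ℝ)/512) * (n:ℝ) ^ M := by
                nlinarith [Real.exp_pos (-(u:ℝ)/512)]
  · -- Case B: few happy particles, split movers into two groups
    push_neg at hcase
    have hun : (6:ℝ)/25 * n ≤ u := by linarith
    have hu18 : (18:ℝ) ≤ u := by
      have h75 : (75:ℝ) ≤ n := by exact_mod_cast hn75
      linarith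
    set m := u / 2 with hm
    have hmu : m ≤ u := Nat.div_le_self u 2
    have h2m : u ≤ 2 * m + 1 := by omega
    have h2m' : 2 * m ≤ u := by omega
    obtain ⟨S1, hS1sub, hS1card⟩ :=
      Finset.exists_subset_card_eq (show u - m ≤ (Sfin c).card by omega)
    set S2 := Sfin c \ S1 with hS2
    have hS2card : S2.card = m := by
      rw [hS2, Finset.card_sdiff_of_subset hS1sub, hS1card, ← hu]; omega
    have hdisj : Disjoint S1 S2 := Finset.disjoint_sdiff
    have hS1S2 : S1 ∪ S2 = Sfin c := Finset.union_sdiff_of_subset hS1sub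
    set res : (Fin M → ℕ) → (Fin M → ℕ) := fun y i => if i ∈ S1 then y i else 0 with hres
    set Bad := piF.filter
      (fun y => (newUF c y : ℝ) < (2:ℝ) ^ (-5:ℤ) * (Sfin c).card) with hBad
    set B0 : ℝ := Real.exp k * (119/128 : ℝ) ^ m * (n:ℝ) ^ (m + (M - u)) with hB0
    have hfib := Finset.card_eq_sum_card_fiberwise
      (fun y (hy : y ∈ Bad) => Finset.mem_image_of_mem res hy)
    have hfiber : ∀ h ∈ Bad.image res,
        ((Bad.filter (fun y => res y = h)).card : ℝ) ≤ B0 := by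
      intro h hh
      rw [Finset.mem_image] at hh
      obtain ⟨y0, hy0Bad, hy0res⟩ := hh
      have hy0piF : y0 ∈ piF := (Finset.mem_filter.mp hy0Bad).1
      set V1 := S1.image h with hV1
      have hagree0 : ∀ i ∈ S1, h i = y0 i := by
        intro i hi
        rw [← hy0res, hres]
        simp [hi]
      have hV1sub : V1 ⊆ Finset.range n := by
        intro a ha
        rw [hV1, Finset.mem_image] at ha
        obtain ⟨i, hi, hia⟩ := ha
        rw [← hia, hagree0 i hi]
        exact Fintype.mem_piFinset.mp hy0piF i
      by_cases hv : (V1.card : ℝ) ≤ (S1.card : ℝ) - k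
      · -- deterministically at least k new unhappy particles: fiber is empty
        have hemp : Bad.filter (fun y => res y = h) = ∅ := by
          rw [Finset.eq_empty_iff_forall_notMem]
          intro y hy
          rw [Finset.mem_filter, hBad, Finset.mem_filter] at hy
          obtain ⟨⟨hypiF, hyBad⟩, hyres⟩ := hy
          have hagree : ∀ i ∈ S1, y i = h i := by
            intro i hi
            rw [← hyres, hres]
            simp [hi]
          set AL := S1.filter (fun i => ∀ j ∈ S1, j ≠ i → y j ≠ y i) with hAL
          have hALcard : AL.card ≤ V1.card := by
            apply Finset.card_le_card_of_injOn (fun i => y i)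
            · intro i hi
              rw [Finset.mem_coe, hAL, Finset.mem_filter] at hi
              rw [hV1]
              exact Finset.mem_image.mpr ⟨i, hi.1, (hagree i hi.1).symm⟩
            · intro i hi i' hi' he
              rw [Finset.mem_coe, hAL, Finset.mem_filter] at hi hi'
              by_contra hne
              exact hi'.2 i hi.1 hne he
          have hnewU : S1.card - AL.card ≤ newUF c y := by
            have hcd : (S1 \ AL).card ≤ newUF c y := by
              apply newUF_ge
              intro i hi
              rw [Finset.mem_sdiff, hAL, Finset.mem_filter] at hi
              obtain ⟨hiS1, hial⟩ := hi
              push_neg at hial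
              obtain ⟨j, hjS1, hjne, hje⟩ := hial hiS1
              refine ⟨j, hjne, ?_⟩
              rw [newposF_of_unhappy y (hS1sub hjS1), newposF_of_unhappy y (hS1sub hiS1), hje]
            rw [Finset.card_sdiff_of_subset (Finset.filter_subset _ _)] at hcd
            exact hcd
          have hAL2 : ((S1.card : ℝ) - AL.card) ≤ newUF c y := by
            have := Nat.cast_le (α := ℝ) |>.mpr hnewU
            rw [Nat.cast_sub (Finset.card_le_card (Finset.filter_subset _ _))] at this
            exact this
          have hALV : (AL.card : ℝ) ≤ V1.card := by exact_mod_cast hALcard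
          rw [← hu] at hyBad
          linarith
        rw [hemp]
        simp only [Finset.card_empty, Nat.cast_zero]
        positivity
      · push_neg at hv
        have hS1cardR : ((S1.card : ℝ)) = u - m := by
          rw [hS1card]
          rw [Nat.cast_sub hmu]
        have hmR : (m:ℝ) ≤ (u:ℝ)/2 := by
          have : ((2*m : ℕ) : ℝ) ≤ u := by exact_mod_cast h2m'
          push_cast at this
          linarith
        have hv15 : (15:ℝ)/32 * u ≤ V1.card := by
          rw [hS1cardR] at hv
          rw [hk32] at hv
          linarith
        -- fiber is contained in the Chernoff event
        have hsubB : Bad.filter (fun y => res y = h) ⊆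
            piF.filter (fun y => (∀ i ∈ S1, y i = h i) ∧
              (((S2.filter (fun i => y i ∈ V1)).card : ℝ) < k)) := by
          intro y hy
          rw [Finset.mem_filter, hBad, Finset.mem_filter] at hy
          obtain ⟨⟨hypiF, hyBad⟩, hyres⟩ := hy
          have hagree : ∀ i ∈ S1, y i = h i := by
            intro i hi
            rw [← hyres, hres]
            simp [hi]
          rw [Finset.mem_filter]
          refine ⟨hypiF, hagree, ?_⟩
          refine lt_of_le_of_lt ?_ (by rw [← hu] at hyBad; exact hyBad)
          have hle : ((S2.filter (fun i => y i ∈ V1)).card) ≤ newUF c y := by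
            apply newUF_ge
            intro i hi
            rw [Finset.mem_filter] at hi
            obtain ⟨hiS2, hiV1⟩ := hi
            rw [hV1, Finset.mem_image] at hiV1
            obtain ⟨j, hjS1, hje⟩ := hiV1
            have hjne : j ≠ i := fun he =>
              (Finset.disjoint_left.mp hdisj) (he ▸ hjS1) hiS2
            refine ⟨j, hjne, ?_⟩
            rw [newposF_of_unhappy y (hS1sub hjS1),
              newposF_of_unhappy y ((Finset.sdiff_subset) hiS2 : i ∈ Sfin c),
              hagree j hjS1, hje]
          exact_mod_cast hle
        have hch := chern n M S1 S2 hdisj h V1 hV1sub k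
        have hc1 : ((Bad.filter (fun y => res y = h)).card : ℝ)
            ≤ Real.exp k * ((n : ℝ) - (1 - Real.exp (-1)) * V1.card) ^ S2.card
              * (n : ℝ) ^ ((univ \ (S1 ∪ S2)).card) := by
          refine le_trans ?_ hch
          exact_mod_cast Finset.card_le_card hsubB
        have hexps : (univ \ (S1 ∪ S2)).card = M - u := by
          rw [hS1S2, Finset.card_sdiff_of_subset (Finset.subset_univ _), Finset.card_univ,
            Fintype.card_fin, ← hu]
        have hvnn : (0:ℝ) ≤ (V1.card:ℝ) := Nat.cast_nonneg V1.card
        have hbase0 : (0:ℝ) ≤ (n : ℝ) - (1 - Real.exp (-1)) * V1.card := by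
          have h1 : (V1.card : ℝ) ≤ n := by
            exact_mod_cast (Finset.card_le_card hV1sub).trans_eq (Finset.card_range n)
          have p2 : (1 - Real.exp (-1)) * V1.card ≤ 1 * V1.card :=
            mul_le_mul_of_nonneg_right hepos hvnn
          linarith
        have hbase : (n : ℝ) - (1 - Real.exp (-1)) * V1.card ≤ 119/128 * n := by
          have p1 : (5/8:ℝ) * V1.card ≤ (1 - Real.exp (-1)) * V1.card :=
            mul_le_mul_of_nonneg_right hexpinv' hvnn
          linarith
        calc ((Bad.filter (fun y => res y = h)).card : ℝ)
            ≤ Real.exp k * ((n : ℝ) - (1 - Real.exp (-1)) * V1.card) ^ m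
              * (n : ℝ) ^ (M - u) := by rw [← hS2card, ← hexps]; exact hc1
          _ ≤ Real.exp k * (119/128 * (n:ℝ)) ^ m * (n : ℝ) ^ (M - u) := by
              have h1 := pow_le_pow_left₀ hbase0 hbase m
              have h2 : (0:ℝ) ≤ (n : ℝ) ^ (M - u) := by positivity
              exact mul_le_mul_of_nonneg_right
                (mul_le_mul_of_nonneg_left h1 (Real.exp_pos k).le) h2
          _ = B0 := by rw [hB0, pow_add, mul_pow]; ring
    have himg : ((Bad.image res).card : ℝ) ≤ (n:ℝ) ^ (u - m) := by
      have hsubI : Bad.image res ⊆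
          Fintype.piFinset (fun i => if i ∈ S1 then Finset.range n else {0}) := by
        intro z hz
        rw [Finset.mem_image] at hz
        obtain ⟨y, hyBad, hyz⟩ := hz
        have hypiF : y ∈ piF := (Finset.mem_filter.mp hyBad).1
        rw [Fintype.mem_piFinset]
        intro i
        rw [← hyz, hres]
        by_cases hi : i ∈ S1
        · simp only [hi, if_true]
          exact Fintype.mem_piFinset.mp hypiF i
        · simp [hi]
      have hcardI : (Fintype.piFinset
          (fun i => if i ∈ S1 then Finset.range n else ({0} : Finset ℕ))).card
          = n ^ (u - m) := by
        rw [Fintype.card_piFinset]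
        have : ∀ i : Fin M, (if i ∈ S1 then Finset.range n else ({0} : Finset ℕ)).card
            = if i ∈ S1 then n else 1 := by
          intro i; split <;> simp
        rw [Finset.prod_congr rfl (fun i _ => this i), Finset.prod_ite_mem,
          Finset.univ_inter, Finset.prod_const, hS1card]
      calc ((Bad.image res).card : ℝ) ≤ ((Fintype.piFinset
          (fun i => if i ∈ S1 then Finset.range n else ({0} : Finset ℕ))).card : ℝ) := by
            exact_mod_cast Finset.card_le_card hsubI
        _ = (n:ℝ) ^ (u - m) := by rw [hcardI]; push_cast; ring
    have htot : ((Bad.card : ℝ)) ≤ (n:ℝ) ^ (u - m) * B0 := by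
      rw [hfib]
      push_cast
      calc (∑ h ∈ Bad.image res, ((Bad.filter (fun y => res y = h)).card : ℝ))
          ≤ ∑ _h ∈ Bad.image res, B0 := Finset.sum_le_sum hfiber
        _ = (Bad.image res).card * B0 := by rw [Finset.sum_const, nsmul_eq_mul]
        _ ≤ (n:ℝ) ^ (u - m) * B0 := by
            have hB0pos : 0 ≤ B0 := by rw [hB0]; positivity
            exact mul_le_mul_of_nonneg_right himg hB0pos
    have hpow : (n:ℝ) ^ (u - m) * (n:ℝ) ^ (m + (M - u)) = (n:ℝ) ^ M := by
      rw [← pow_add]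
      congr 1
      omega
    have h119 : (119/128 : ℝ) ≤ Real.exp (-(7/100)) := by
      have h1 : (1:ℝ) - 7/100 ≤ Real.exp (-(7/100)) := by
        have := Real.add_one_le_exp (-(7/100) : ℝ)
        linarith
      have h2 : Real.exp (-(7/100)) > 0 := Real.exp_pos _
      nlinarith
    have hlog2 : (7/200 : ℝ) ≤ Real.log 2 := by
      rw [Real.le_log_iff_exp_le (by norm_num : (0:ℝ) < 2)]
      have h1 : (1:ℝ) - 7/200 ≤ Real.exp (-(7/200)) := by
        have := Real.add_one_le_exp (-(7/200) : ℝ)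
        linarith
      have h2 : Real.exp (7/200) * Real.exp (-(7/200)) = 1 := by
        rw [← Real.exp_add]; norm_num
      nlinarith [Real.exp_pos (-(7/200) : ℝ), Real.exp_pos (7/200 : ℝ)]
    have hmhalf : ((u:ℝ) - 1)/2 ≤ m := by
      have : ((u:ℕ):ℝ) ≤ ((2*m + 1 : ℕ):ℝ) := by exact_mod_cast h2m
      push_cast at this
      linarith
    have hfinal : Real.exp k * (119/128 : ℝ) ^ m ≤ 2 * Real.exp (-(u:ℝ)/512) := by
      have h1 : (119/128 : ℝ) ^ m ≤ Real.exp (-(7/100) * m) := by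
        calc (119/128 : ℝ) ^ m ≤ Real.exp (-(7/100)) ^ m :=
              pow_le_pow_left₀ (by norm_num) h119 m
          _ = Real.exp ((m:ℝ) * (-(7/100))) := by rw [← Real.exp_nat_mul]
          _ = Real.exp (-(7/100) * m) := by rw [mul_comm]
      have h2 : Real.exp k * Real.exp (-(7/100) * m) = Real.exp (k + -(7/100) * m) := by
        rw [← Real.exp_add]
      have h3 : k + -(7/100) * m ≤ Real.log 2 + (-(u:ℝ)/512) := by
        rw [hk32]
        linarith
      calc Real.exp k * (119/128 : ℝ) ^ m
          ≤ Real.exp k * Real.exp (-(7/100) * m) :=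
            mul_le_mul_of_nonneg_left h1 (Real.exp_pos k).le
        _ = Real.exp (k + -(7/100) * m) := h2
        _ ≤ Real.exp (Real.log 2 + (-(u:ℝ)/512)) := Real.exp_le_exp.mpr h3
        _ = 2 * Real.exp (-(u:ℝ)/512) := by
            rw [Real.exp_add, Real.exp_log (by norm_num : (0:ℝ) < 2)]
        _ = 2 * Real.exp (-(u:ℝ)/512) := rfl
    calc ((Bad.card : ℝ)) ≤ (n:ℝ) ^ (u - m) * B0 := htot
      _ = Real.exp k * (119/128 : ℝ) ^ m * (n:ℝ) ^ M := by
          rw [hB0, ← hpow]; ring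
      _ ≤ 2 * Real.exp (-(u:ℝ)/512) * (n:ℝ) ^ M := by
          have h4 : (0:ℝ) ≤ (n:ℝ) ^ M := by positivity
          exact mul_le_mul_of_nonneg_right hfinal h4
lemma dpos_zero (M : ℕ) (g : ℕ × ℕ → ℕ) (i : ℕ) : dpos M g 0 i = 0 := rfl

open Classical in
lemma dpos_succ (M : ℕ) (g : ℕ × ℕ → ℕ) (t i : ℕ) :
    dpos M g (t+1) i = if ∀ j, j < M → j ≠ i → dpos M g t j ≠ dpos M g t i
      then dpos M g t i else g (t, i) := by
  simp only [dpos, pos]; exact if_congr Iff.rfl rfl rfl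

open Classical in
lemma dU_def (M : ℕ) (g : ℕ × ℕ → ℕ) (t : ℕ) :
    dU M g t = ((Finset.range M).filter
      (fun i => ∃ j, j < M ∧ j ≠ i ∧ dpos M g t j = dpos M g t i)).card := rfl

open Classical in
lemma Sfin_def {M : ℕ} (c : Fin M → ℕ) :
    Sfin c = Finset.univ.filter (fun i => ∃ j, j ≠ i ∧ c j = c i) := rfl

open Classical in
lemma newposF_def {M : ℕ} (c y : Fin M → ℕ) (i : Fin M) :
    newposF c y i = if ∀ j, j ≠ i → c j ≠ c i then c i else y i := rfl

open Classical in
lemma newUF_def {M : ℕ} (c y : Fin M → ℕ) :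
    newUF c y = (Finset.univ.filter
      (fun i => ∃ j, j ≠ i ∧ newposF c y j = newposF c y i)).card := rfl

open Classical in
/-- all functions `ℕ×ℕ → ℕ` supported on `Q` with values `< n` on `Q`. -/
noncomputable def XQ (n : ℕ) (Q : Finset (ℕ × ℕ)) : Finset ((ℕ × ℕ) → ℕ) :=
  (Q.pi (fun _ => Finset.range n)).image (fun f p => if h : p ∈ Q then f p h else 0)

lemma mem_XQ_iff {n : ℕ} {Q : Finset (ℕ × ℕ)} {x : (ℕ × ℕ) → ℕ} :
    x ∈ XQ n Q ↔ (∀ p ∈ Q, x p < n) ∧ (∀ p ∉ Q, x p = 0) := by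
  classical
  constructor
  · intro hx
    rw [XQ, Finset.mem_image] at hx
    obtain ⟨f, hf, hfx⟩ := hx
    rw [Finset.mem_pi] at hf
    constructor
    · intro p hp
      rw [← hfx]
      simp only [hp, dif_pos]
      exact Finset.mem_range.mp (hf p hp)
    · intro p hp
      rw [← hfx]
      simp [hp]
  · rintro ⟨h1, h2⟩
    rw [XQ, Finset.mem_image]
    refine ⟨fun p _ => x p, ?_, ?_⟩
    · rw [Finset.mem_pi]
      intro p hp
      exact Finset.mem_range.mpr (h1 p hp)
    · funext p
      by_cases hp : p ∈ Q
      · simp [hp]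
      · simp [hp, h2 p hp]

lemma card_XQ_le (n : ℕ) (Q : Finset (ℕ × ℕ)) : (XQ n Q).card ≤ n ^ Q.card := by
  classical
  refine (Finset.card_image_le).trans ?_
  rw [Finset.card_pi]
  rw [Finset.prod_congr rfl (fun p _ => Finset.card_range n)]
  rw [Finset.prod_const]

/-- translation between counting over `range M` and over `Fin M` -/
lemma card_filter_range_fin (M : ℕ) (P : ℕ → Prop) (PF : Fin M → Prop)
    [DecidablePred P] [DecidablePred PF] (h : ∀ i : Fin M, P i.val ↔ PF i) :
    ((Finset.range M).filter P).card = (univ.filter PF).card := by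
  rw [Finset.card_filter, Finset.card_filter]
  rw [← Fin.sum_univ_eq_sum_range (fun a => if P a then 1 else 0) M]
  apply Finset.sum_congr rfl
  intro i _
  exact if_congr (h i) rfl rfl

lemma dU_eq_Sfin (M : ℕ) (g : ℕ × ℕ → ℕ) (t : ℕ) :
    dU M g t = (Sfin (fun i : Fin M => dpos M g t i.val)).card := by
  classical
  rw [dU_def, Sfin_def]
  apply card_filter_range_fin
  intro i
  constructor
  · rintro ⟨j, hj, hne, he⟩
    exact ⟨⟨j, hj⟩, fun hc => hne (by simpa using congrArg Fin.val hc), he⟩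
  · rintro ⟨j, hne, he⟩
    exact ⟨j.val, j.isLt, fun hc => hne (Fin.ext hc), he⟩

lemma dU_succ_eq_newUF (M : ℕ) (g : ℕ × ℕ → ℕ) (t : ℕ) :
    dU M g (t+1) = newUF (fun i : Fin M => dpos M g t i.val)
      (fun i : Fin M => g (t, i.val)) := by
  classical
  set c : Fin M → ℕ := fun i => dpos M g t i.val with hc
  set y : Fin M → ℕ := fun i => g (t, i.val) with hy
  have hpos : ∀ i : Fin M, dpos M g (t+1) i.val = newposF c y i := by
    intro i
    rw [dpos_succ, newposF_def]
    have hcond : (∀ j, j < M → j ≠ i.val → dpos M g t j ≠ dpos M g t i.val)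
        ↔ (∀ j : Fin M, j ≠ i → c j ≠ c i) := by
      constructor
      · intro hC j hne
        exact hC j.val j.isLt (fun hv => hne (Fin.ext hv))
      · intro hC j hj hne
        exact hC ⟨j, hj⟩ (fun hc' => hne (by simpa using congrArg Fin.val hc'))
    by_cases hcd : ∀ j, j < M → j ≠ i.val → dpos M g t j ≠ dpos M g t i.val
    · rw [if_pos hcd, if_pos (hcond.mp hcd)]
    · rw [if_neg hcd, if_neg (fun h' => hcd (hcond.mpr h'))]
  rw [dU_def, newUF_def]
  apply card_filter_range_fin
  intro i
  constructor
  · rintro ⟨j, hj, hne, he⟩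
    refine ⟨⟨j, hj⟩, fun hc' => hne (by simpa using congrArg Fin.val hc'), ?_⟩
    rw [← hpos ⟨j, hj⟩, ← hpos i]
    exact he
  · rintro ⟨j, hne, he⟩
    refine ⟨j.val, j.isLt, fun hc' => hne (Fin.ext hc'), ?_⟩
    rw [hpos j, hpos i] at *
    exact he

set_option maxHeartbeats 1000000 in
open Classical in
/-- one-step counting bound: among all possible driver histories up to time `t+1`,
the proportion for which `U_t > θ` but `U_{t+1} < 2⁻⁵ U_t` is at most `2exp(-θ/512)`. -/
lemma step_count (n M t : ℕ) (hn75 : 75 ≤ n)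
    (hM1 : (49 : ℝ) * n ≤ 100 * M) (hMn : M ≤ n) (θ : ℝ) :
    (((XQ n (Finset.range (t+1) ×ˢ Finset.range M)).filter
        (fun x => θ < (dU M x t : ℝ) ∧ (dU M x (t+1) : ℝ) < (2:ℝ) ^ (-5:ℤ) * dU M x t)).card : ℝ)
      ≤ 2 * Real.exp (-θ / 512) * (n:ℝ) ^ ((t+1) * M) := by
  classical
  have hn : 0 < n := by omega
  set Q : Finset (ℕ × ℕ) := Finset.range (t+1) ×ˢ Finset.range M with hQ
  set Qh : Finset (ℕ × ℕ) := Finset.range t ×ˢ Finset.range M with hQh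
  set A := (XQ n Q).filter
    (fun x => θ < (dU M x t : ℝ) ∧ (dU M x (t+1) : ℝ) < (2:ℝ) ^ (-5:ℤ) * dU M x t) with hA
  set ρ : ((ℕ × ℕ) → ℕ) → ((ℕ × ℕ) → ℕ) := fun x p => if p ∈ Qh then x p else 0 with hρ
  have hQhQ : Qh ⊆ Q := by
    intro p hp
    rw [hQh, Finset.mem_product] at hp
    rw [hQ, Finset.mem_product]
    exact ⟨Finset.mem_range.mpr ((Finset.mem_range.mp hp.1).trans (Nat.lt_succ_self t)), hp.2⟩
  have hfib := Finset.card_eq_sum_card_fiberwise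
    (fun x (hx : x ∈ A) => Finset.mem_image_of_mem ρ hx)
  -- each fiber injects into a configuration bad set
  have hfiber : ∀ h ∈ A.image ρ,
      ((A.filter (fun x => ρ x = h)).card : ℝ) ≤ 2 * Real.exp (-θ / 512) * (n:ℝ) ^ M := by
    intro h hh
    rw [Finset.mem_image] at hh
    obtain ⟨x₀, hx₀A, hx₀ρ⟩ := hh
    have hx₀X : x₀ ∈ XQ n Q := (Finset.mem_filter.mp hx₀A).1
    have hx₀mem := mem_XQ_iff.mp hx₀X
    -- values of h on Qh are < n
    have hhval : ∀ s j, s < t → j < M → h (s, j) < n := by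
      intro s j hs hj
      rw [← hx₀ρ, hρ]
      have hpQh : ((s, j) : ℕ × ℕ) ∈ Qh := by
        rw [hQh, Finset.mem_product]
        exact ⟨Finset.mem_range.mpr hs, Finset.mem_range.mpr hj⟩
      simp only [hpQh, if_pos]
      exact hx₀mem.1 _ (hQhQ hpQh)
    set cF : Fin M → ℕ := fun i => dpos M h t i.val with hcF
    have hcFlt : ∀ i : Fin M, cF i < n :=
      fun i => dpos_lt n M hn h t hhval i.val i.isLt
    -- every x in the fiber agrees with h on histories
    have hagree : ∀ x, x ∈ A.filter (fun x => ρ x = h) →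
        ∀ s j, s < t → j < M → x (s, j) = h (s, j) := by
      intro x hx s j hs hj
      have hxρ : ρ x = h := (Finset.mem_filter.mp hx).2
      rw [← hxρ, hρ]
      have hpQh : ((s, j) : ℕ × ℕ) ∈ Qh := by
        rw [hQh, Finset.mem_product]
        exact ⟨Finset.mem_range.mpr hs, Finset.mem_range.mpr hj⟩
      simp [hpQh]
    -- dU of fiber elements at time t equals the configuration count
    have hUt : ∀ x, x ∈ A.filter (fun x => ρ x = h) →
        dU M x t = (Sfin cF).card ∧ dU M x (t+1) = newUF cF (fun i : Fin M => x (t, i.val)) := by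
      intro x hx
      have hcongr : ∀ i : Fin M, dpos M x t i.val = cF i := by
        intro i
        exact dpos_congr M x h t (fun s j hs hj => hagree x hx s j hs hj) i.val i.isLt
      have hfeq : (fun i : Fin M => dpos M x t i.val) = cF := funext hcongr
      constructor
      · rw [dU_eq_Sfin M x t, hfeq]
      · rw [dU_succ_eq_newUF M x t, hfeq]
    -- the map to the configuration world, injective on the fiber
    set ψ : ((ℕ × ℕ) → ℕ) → (Fin M → ℕ) := fun x i => x (t, i.val) with hψ
    have hinj : Set.InjOn ψ (A.filter (fun x => ρ x = h)) := by
      intro x hx x' hx' he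
      rw [Finset.mem_coe] at hx hx'
      have hxX := mem_XQ_iff.mp (Finset.mem_filter.mp (Finset.mem_filter.mp hx).1).1
      have hx'X := mem_XQ_iff.mp (Finset.mem_filter.mp (Finset.mem_filter.mp hx').1).1
      funext p
      by_cases hpQ : p ∈ Q
      · rw [hQ, Finset.mem_product, Finset.mem_range, Finset.mem_range] at hpQ
        obtain ⟨hp1, hp2⟩ := hpQ
        rcases Nat.lt_succ_iff_lt_or_eq.mp hp1 with hlt | heq
        · have := hagree x hx p.1 p.2 hlt hp2
          have h2 := hagree x' hx' p.1 p.2 hlt hp2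
          rw [show p = (p.1, p.2) from rfl] at *
          rw [this, h2]
        · have : x (t, p.2) = x' (t, p.2) := by
            have := congrFun he (⟨p.2, hp2⟩ : Fin M)
            simpa [hψ] using this
          rw [show p = (p.1, p.2) from rfl, heq]
          exact this
      · rw [hxX.2 p hpQ, hx'X.2 p hpQ]
    have hmaps : ∀ x ∈ A.filter (fun x => ρ x = h), ψ x ∈
        (Fintype.piFinset (fun _ : Fin M => Finset.range n)).filter
          (fun y => (newUF cF y : ℝ) < (2:ℝ) ^ (-5 : ℤ) * (Sfin cF).card) := by
      intro x hx
      have hxA := (Finset.mem_filter.mp hx).1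
      have hxX := mem_XQ_iff.mp (Finset.mem_filter.mp hxA).1
      have hxbad := (Finset.mem_filter.mp hxA).2
      rw [Finset.mem_filter]
      constructor
      · rw [Fintype.mem_piFinset]
        intro i
        rw [Finset.mem_range, hψ]
        apply hxX.1
        rw [hQ, Finset.mem_product]
        exact ⟨Finset.mem_range.mpr (Nat.lt_succ_self t), Finset.mem_range.mpr i.isLt⟩
      · obtain ⟨hU1, hU2⟩ := hUt x hx
        have h2 := hxbad.2
        rw [hU2, hU1] at h2
        exact h2
    have hcardle : (A.filter (fun x => ρ x = h)).card ≤
        ((Fintype.piFinset (fun _ : Fin M => Finset.range n)).filter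
          (fun y => (newUF cF y : ℝ) < (2:ℝ) ^ (-5 : ℤ) * (Sfin cF).card)).card :=
      Finset.card_le_card_of_injOn ψ hmaps hinj
    -- θ < u for the fiber configuration (fiber is nonempty)
    have hx₀fib : x₀ ∈ A.filter (fun x => ρ x = h) := by
      rw [Finset.mem_filter]
      exact ⟨hx₀A, hx₀ρ⟩
    have hθu : θ < ((Sfin cF).card : ℝ) := by
      have := (Finset.mem_filter.mp hx₀A).2.1
      rw [(hUt x₀ hx₀fib).1] at this
      exact this
    calc ((A.filter (fun x => ρ x = h)).card : ℝ)
        ≤ (((Fintype.piFinset (fun _ : Fin M => Finset.range n)).filter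
          (fun y => (newUF cF y : ℝ) < (2:ℝ) ^ (-5 : ℤ) * (Sfin cF).card)).card : ℝ) := by
          exact_mod_cast hcardle
      _ ≤ 2 * Real.exp (-((Sfin cF).card : ℝ) / 512) * (n : ℝ) ^ M :=
          config_count n M hn75 cF hcFlt hM1 hMn
      _ ≤ 2 * Real.exp (-θ / 512) * (n:ℝ) ^ M := by
          have h1 : Real.exp (-((Sfin cF).card : ℝ) / 512) ≤ Real.exp (-θ / 512) := by
            apply Real.exp_le_exp.mpr
            linarith
          have h2 : (0:ℝ) ≤ (n:ℝ) ^ M := by positivity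
          nlinarith
  -- number of fibers
  have himg : ((A.image ρ).card : ℝ) ≤ (n:ℝ) ^ (t * M) := by
    have hsubI : A.image ρ ⊆ XQ n Qh := by
      intro z hz
      rw [Finset.mem_image] at hz
      obtain ⟨x, hxA, hxz⟩ := hz
      have hxX := mem_XQ_iff.mp (Finset.mem_filter.mp hxA).1
      rw [mem_XQ_iff]
      constructor
      · intro p hp
        rw [← hxz, hρ]
        simp only [hp, if_pos]
        exact hxX.1 p (hQhQ hp)
      · intro p hp
        rw [← hxz, hρ]
        simp [hp]
    have h1 : (XQ n Qh).card ≤ n ^ Qh.card := card_XQ_le n Qh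
    have h2 : Qh.card = t * M := by
      rw [hQh, Finset.card_product, Finset.card_range, Finset.card_range]
    calc ((A.image ρ).card : ℝ) ≤ ((XQ n Qh).card : ℝ) := by
          exact_mod_cast Finset.card_le_card hsubI
      _ ≤ (n:ℝ) ^ (t * M) := by
          rw [← h2]
          exact_mod_cast h1
  calc ((A.card : ℝ))
      = ∑ h ∈ A.image ρ, ((A.filter (fun x => ρ x = h)).card : ℝ) := by
        rw [hfib]; push_cast; rfl
    _ ≤ ∑ _h ∈ A.image ρ, (2 * Real.exp (-θ / 512) * (n:ℝ) ^ M) :=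
        Finset.sum_le_sum hfiber
    _ = ((A.image ρ).card : ℝ) * (2 * Real.exp (-θ / 512) * (n:ℝ) ^ M) := by
        rw [Finset.sum_const, nsmul_eq_mul]
    _ ≤ (n:ℝ) ^ (t * M) * (2 * Real.exp (-θ / 512) * (n:ℝ) ^ M) := by
        have : (0:ℝ) ≤ 2 * Real.exp (-θ / 512) * (n:ℝ) ^ M := by positivity
        exact mul_le_mul_of_nonneg_right himg this
    _ = 2 * Real.exp (-θ / 512) * ((n:ℝ) ^ (t * M) * (n:ℝ) ^ M) := by ring
    _ = 2 * Real.exp (-θ / 512) * (n:ℝ) ^ ((t+1) * M) := by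
        rw [← pow_add]
        congr 2
        ring
lemma moveDist_singleton (n : ℕ) (hn : 0 < n) (a : ℕ) :
    moveDist n {a} = if a ∈ Finset.range n then ((n : ℝ≥0∞))⁻¹ else 0 := by
  rw [moveDist, dif_pos hn,
    PMF.toMeasure_apply_singleton _ a (measurableSet_singleton a),
    PMF.uniformOfFinset_apply, Finset.card_range]
  congr

lemma moveDist_tail (n : ℕ) (hn : 0 < n) :
    moveDist n {m : ℕ | n ≤ m} = 0 := by
  rw [moveDist, dif_pos hn]
  rw [PMF.toMeasure_apply_eq_zero_iff (hs := by trivial)]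
  rw [PMF.support_uniformOfFinset]
  intro s hs1 hs2 a ha
  have h1 : a < n := by
    have := hs1 ha
    rwa [Finset.coe_range, Set.mem_Iio] at this
  have h2 : n ≤ a := hs2 ha
  exact absurd h2 (by omega)

lemma driver_preimage {Ωs : Type} [MeasurableSpace Ωs] {n : ℕ} {μ : Measure Ωs}
    {G : ℕ × ℕ → Ωs → ℕ} (hd : IsDriver n μ G) (p : ℕ × ℕ) (s : Set ℕ) :
    μ (G p ⁻¹' s) = moveDist n s := by
  rw [← hd.unif p, Measure.map_apply (hd.meas p) (by trivial : MeasurableSet s)]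

lemma atom_measure {Ωs : Type} [MeasurableSpace Ωs] {n : ℕ} {μ : Measure Ωs}
    {G : ℕ × ℕ → Ωs → ℕ} (hd : IsDriver n μ G) (hn : 0 < n)
    (Q : Finset (ℕ × ℕ)) (x : ℕ × ℕ → ℕ) (hx : ∀ p ∈ Q, x p < n) :
    μ (⋂ p ∈ Q, G p ⁻¹' {x p}) = ((n : ℝ≥0∞))⁻¹ ^ Q.card := by
  have h1 := hd.indep.measure_inter_preimage_eq_mul (μ := μ) Q
    (sets := fun p => ({x p} : Set ℕ)) (fun p _ => by trivial)
  rw [h1]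
  rw [Finset.prod_congr rfl (fun p hp => ?_), Finset.prod_const]
  rw [driver_preimage hd, moveDist_singleton n hn, if_pos (Finset.mem_range.mpr (hx p hp))]
set_option maxHeartbeats 800000 in
open Classical in
lemma step_measure {Ωs : Type} [MeasurableSpace Ωs] {n M : ℕ} {μ : Measure Ωs}
    {G : ℕ × ℕ → Ωs → ℕ} (hd : IsDriver n μ G) (hn : 0 < n) (t : ℕ) (θ β : ℝ) (hβ : 0 ≤ β)
    (hcount : (((XQ n (Finset.range (t+1) ×ˢ Finset.range M)).filter
        (fun x => θ < (dU M x t : ℝ) ∧ (dU M x (t+1) : ℝ) < (2:ℝ) ^ (-5:ℤ) * dU M x t)).card : ℝ)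
      ≤ β * (n:ℝ) ^ ((t+1) * M)) :
    μ {ω | θ < (U M G ω t : ℝ) ∧ (U M G ω (t+1) : ℝ) < (2:ℝ) ^ (-5:ℤ) * (U M G ω t)}
      ≤ ENNReal.ofReal β := by
  classical
  set Q : Finset (ℕ × ℕ) := Finset.range (t+1) ×ˢ Finset.range M with hQ
  have hQcard : Q.card = (t+1) * M := by
    rw [hQ, Finset.card_product, Finset.card_range, Finset.card_range]
  set A := (XQ n Q).filter
    (fun x => θ < (dU M x t : ℝ) ∧ (dU M x (t+1) : ℝ) < (2:ℝ) ^ (-5:ℤ) * dU M x t) with hA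
  set E := {ω | θ < (U M G ω t : ℝ) ∧ (U M G ω (t+1) : ℝ) < (2:ℝ) ^ (-5:ℤ) * (U M G ω t)}
    with hE
  set Bad := ⋃ p ∈ Q, G p ⁻¹' {m : ℕ | n ≤ m} with hBad
  have hsub : E ⊆ (⋃ x ∈ A, ⋂ p ∈ Q, G p ⁻¹' {x p}) ∪ Bad := by
    intro ω hω
    by_cases hbad : ω ∈ Bad
    · exact Or.inr hbad
    · left
      have hlt : ∀ p ∈ Q, G p ω < n := by
        intro p hp
        by_contra hcon
        exact hbad (Set.mem_biUnion hp (by simpa using Nat.le_of_not_lt hcon))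
      set x : (ℕ × ℕ) → ℕ := fun p => if p ∈ Q then G p ω else 0 with hx
      have hxQ : x ∈ XQ n Q := by
        rw [mem_XQ_iff]
        constructor
        · intro p hp
          rw [hx]
          simp only [hp, if_pos]
          exact hlt p hp
        · intro p hp
          rw [hx]
          simp [hp]
      have hagree : ∀ s, s ≤ t + 1 → dU M (fun p => G p ω) s = dU M x s := by
        intro s hs
        apply dU_congr
        intro s' j hs' hj
        have hpQ : ((s', j) : ℕ × ℕ) ∈ Q := by
          rw [hQ, Finset.mem_product]
          exact ⟨Finset.mem_range.mpr (by omega), Finset.mem_range.mpr hj⟩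
        rw [hx]
        simp [hpQ]
      have hxA : x ∈ A := by
        rw [hA, Finset.mem_filter]
        refine ⟨hxQ, ?_, ?_⟩
        · rw [← hagree t (by omega), ← U_eq_dU]
          exact hω.1
        · rw [← hagree t (by omega), ← hagree (t+1) (by omega), ← U_eq_dU, ← U_eq_dU]
          exact hω.2
      apply Set.mem_biUnion hxA
      simp only [Set.mem_iInter, Set.mem_preimage]
      intro p hp
      rw [hx]
      simp [hp]
  have hBad0 : μ Bad = 0 := by
    rw [hBad]
    refine le_antisymm ?_ zero_le
    calc μ (⋃ p ∈ Q, G p ⁻¹' {m : ℕ | n ≤ m})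
        ≤ ∑ p ∈ Q, μ (G p ⁻¹' {m : ℕ | n ≤ m}) := measure_biUnion_finset_le Q _
      _ = 0 := by
          rw [Finset.sum_congr rfl (fun p _ => ?_), Finset.sum_const, smul_zero]
          rw [driver_preimage hd, moveDist_tail n hn]
  have hmain : μ E ≤ A.card * ((n : ℝ≥0∞))⁻¹ ^ Q.card := by
    calc μ E ≤ μ ((⋃ x ∈ A, ⋂ p ∈ Q, G p ⁻¹' {x p}) ∪ Bad) := measure_mono hsub
      _ ≤ μ (⋃ x ∈ A, ⋂ p ∈ Q, G p ⁻¹' {x p}) + μ Bad := measure_union_le _ _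
      _ = μ (⋃ x ∈ A, ⋂ p ∈ Q, G p ⁻¹' {x p}) := by rw [hBad0, add_zero]
      _ ≤ ∑ x ∈ A, μ (⋂ p ∈ Q, G p ⁻¹' {x p}) := measure_biUnion_finset_le A _
      _ = ∑ _x ∈ A, ((n : ℝ≥0∞))⁻¹ ^ Q.card := by
          apply Finset.sum_congr rfl
          intro x hxA
          have hxX : x ∈ XQ n Q := (Finset.mem_filter.mp hxA).1
          exact atom_measure hd hn Q x (mem_XQ_iff.mp hxX).1
      _ = A.card * ((n : ℝ≥0∞))⁻¹ ^ Q.card := by rw [Finset.sum_const, nsmul_eq_mul]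
  have hnne : ((n:ℝ≥0∞)) ≠ 0 := by
    simp only [ne_eq, Nat.cast_eq_zero]
    omega
  have hpow_ne0 : ((n:ℝ≥0∞)) ^ Q.card ≠ 0 := pow_ne_zero _ hnne
  have hpow_netop : ((n:ℝ≥0∞)) ^ Q.card ≠ ⊤ := by
    exact ENNReal.pow_ne_top (ENNReal.natCast_ne_top n)
  have hcast : (A.card : ℝ≥0∞) ≤ ENNReal.ofReal β * ((n:ℝ≥0∞)) ^ Q.card := by
    have h1 : (A.card : ℝ≥0∞) = ENNReal.ofReal ((A.card : ℝ)) := by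
      rw [ENNReal.ofReal_natCast]
    rw [h1]
    calc ENNReal.ofReal ((A.card : ℝ)) ≤ ENNReal.ofReal (β * (n:ℝ) ^ ((t+1) * M)) :=
        ENNReal.ofReal_le_ofReal hcount
      _ = ENNReal.ofReal β * ENNReal.ofReal ((n:ℝ) ^ ((t+1) * M)) :=
        ENNReal.ofReal_mul hβ
      _ = ENNReal.ofReal β * ((n:ℝ≥0∞)) ^ Q.card := by
        rw [hQcard, ← ENNReal.ofReal_natCast n, ← ENNReal.ofReal_pow (by positivity)]
  calc μ E ≤ A.card * ((n : ℝ≥0∞))⁻¹ ^ Q.card := hmain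
    _ ≤ (ENNReal.ofReal β * ((n:ℝ≥0∞)) ^ Q.card) * ((n : ℝ≥0∞))⁻¹ ^ Q.card :=
        mul_le_mul_left hcast _
    _ = ENNReal.ofReal β * (((n:ℝ≥0∞)) ^ Q.card * (((n:ℝ≥0∞)) ^ Q.card)⁻¹) := by
        rw [ENNReal.inv_pow]
        ring
    _ = ENNReal.ofReal β := by
        rw [ENNReal.mul_inv_cancel hpow_ne0 hpow_netop, mul_one]

lemma finalArith (T b d : ℝ) (hT : T ≤ b) (hb : b ≤ Real.exp d) (hd : 0 ≤ d)
    (hlog : Real.log 4 ≤ 30 * d) :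
    (T + 1) * (2 * Real.exp (-(32 * d))) ≤ Real.exp (-d) := by
  have hexp1 : (1:ℝ) ≤ Real.exp d := Real.one_le_exp hd
  have h4 : (4:ℝ) ≤ Real.exp (30 * d) := by
    calc (4:ℝ) = Real.exp (Real.log 4) := (Real.exp_log (by norm_num)).symm
    _ ≤ Real.exp (30 * d) := Real.exp_le_exp.mpr hlog
  have hA : T + 1 ≤ 2 * Real.exp d := by linarith
  have hB : (T + 1) * (2 * Real.exp (-(32 * d)))
      ≤ (2 * Real.exp d) * (2 * Real.exp (-(32 * d))) := by
    have hpos : (0:ℝ) ≤ 2 * Real.exp (-(32 * d)) := by positivity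
    nlinarith
  have hC : (2 * Real.exp d) * (2 * Real.exp (-(32 * d))) = 4 * Real.exp (-(31 * d)) := by
    calc (2 * Real.exp d) * (2 * Real.exp (-(32 * d)))
        = 4 * (Real.exp d * Real.exp (-(32 * d))) := by ring
      _ = 4 * Real.exp (-(31 * d)) := by
          rw [← Real.exp_add]
          congr 1
          ring
  have hD : 4 * Real.exp (-(31 * d)) ≤ Real.exp (-d) := by
    have h5 : Real.exp (30 * d) * Real.exp (-(31 * d)) = Real.exp (-d) := by
      rw [← Real.exp_add]
      congr 1
      ring
    nlinarith [Real.exp_pos (-(31 * d))]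
  linarith

/-- Lemma 4.2: the good event
`𝒜(b) = {U_{t+1} ≥ 2⁻⁵ U_t for all t ≤ b with U_t > 2⁻⁵ ε̂ n}`
fails with probability at most `exp(-2^{-19} ε̂ n)` whenever `b ≤ exp(2^{-19} ε̂ n)`. -/
theorem statement16 (ε : ℕ → ℝ) (hε : Tendsto ε atTop (𝓝 0)) :
    ∀ᶠ n : ℕ in atTop, ∀ M : ℕ, 2 ≤ M → (M : ℝ) = (1 + ε n) * n / 2 →
      ∀ (Ωs : Type) [MeasurableSpace Ωs] (μ : Measure Ωs) (G : ℕ × ℕ → Ωs → ℕ),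
        IsDriver n μ G →
        ∀ b : ℝ, b ≤ Real.exp ((2 : ℝ) ^ (-19 : ℤ) * ehat n (ε n) * n) →
          μ ({ω | ∀ t : ℕ, (t : ℝ) ≤ b →
                (2 : ℝ) ^ (-5 : ℤ) * ehat n (ε n) * n < (U M G ω t : ℝ) →
                (2 : ℝ) ^ (-5 : ℤ) * (U M G ω t : ℝ) ≤ (U M G ω (t + 1) : ℝ)}ᶜ) ≤
            ENNReal.ofReal (Real.exp (-((2 : ℝ) ^ (-19 : ℤ) * ehat n (ε n) * n))) := by
  
  classical
  have h51 : ∀ᶠ n : ℕ in atTop, |ε n| < 1/51 := by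
    have := hε (Metric.ball_mem_nhds (0:ℝ) (by norm_num : (0:ℝ) < 1/51))
    simpa [Real.dist_eq] using this
  have hF3 : ∀ᶠ n : ℕ in atTop,
      Real.log 4 ≤ 30 * (2:ℝ)^(-19:ℤ) * (Real.exp 1 * (n:ℝ) ^ (-(1/2 : ℝ))) * n := by
    have hc : (0:ℝ) < 30 * (2:ℝ)^(-19:ℤ) * Real.exp 1 := by positivity
    have ht : Tendsto (fun n : ℕ => (30 * (2:ℝ)^(-19:ℤ) * Real.exp 1) * ((n:ℝ) ^ ((1:ℝ)/2)))
        atTop atTop := by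
      apply Tendsto.const_mul_atTop hc
      exact (tendsto_rpow_atTop (by norm_num : (0:ℝ) < 1/2)).comp tendsto_natCast_atTop_atTop
    filter_upwards [ht.eventually_ge_atTop (Real.log 4), eventually_ge_atTop 1] with n hnlog hn1
    have hnpos : (0:ℝ) < n := by exact_mod_cast hn1
    have hrw : (n:ℝ) ^ (-(1/2:ℝ)) * (n:ℝ) = (n:ℝ) ^ ((1:ℝ)/2) := by
      have h2 := Real.rpow_add hnpos (-(1/2)) 1
      rw [Real.rpow_one] at h2
      rw [← h2]
      norm_num
    calc Real.log 4 ≤ (30 * (2:ℝ)^(-19:ℤ) * Real.exp 1) * ((n:ℝ) ^ ((1:ℝ)/2)) := hnlog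
    _ = 30 * (2:ℝ)^(-19:ℤ) * (Real.exp 1 * (n:ℝ) ^ (-(1/2:ℝ))) * n := by
        rw [← hrw]; ring
  filter_upwards [h51, hF3, eventually_ge_atTop 75] with n hε51 hlog hn75
  intro M hM2 hMeq Ωs _inst μ G hdriver b hb
  have hn : 0 < n := by omega
  have hnR : (0:ℝ) < n := by exact_mod_cast hn
  set eh := ehat n (ε n) with heh
  have hehlb : Real.exp 1 * (n:ℝ) ^ (-(1/2 : ℝ)) ≤ eh := le_max_right _ _
  have hehpos : 0 < eh := lt_of_lt_of_le (by positivity) hehlb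
  set δ : ℝ := (2:ℝ)^(-19:ℤ) * eh * n with hδ
  have hδpos : 0 < δ := by
    rw [hδ]
    positivity
  have hlogδ : Real.log 4 ≤ 30 * δ := by
    rw [hδ]
    have h30 : (0:ℝ) ≤ 30 * (2:ℝ)^(-19:ℤ) * n := by positivity
    have hmul := mul_le_mul_of_nonneg_right hehlb h30
    have e1 : 30 * (2:ℝ)^(-19:ℤ) * (Real.exp 1 * (n:ℝ) ^ (-(1/2:ℝ))) * n
        = Real.exp 1 * (n:ℝ) ^ (-(1/2:ℝ)) * (30 * (2:ℝ)^(-19:ℤ) * n) := by ring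
    have e2 : eh * (30 * (2:ℝ)^(-19:ℤ) * n) = 30 * ((2:ℝ)^(-19:ℤ) * eh * n) := by ring
    rw [e1] at hlog
    rw [e2] at hmul
    exact le_trans hlog hmul
  -- bounds on M
  have hεlb : -(1/51 : ℝ) < ε n := neg_lt_of_abs_lt hε51
  have hεub : ε n < 1/51 := lt_of_abs_lt hε51
  have hM1 : (49 : ℝ) * n ≤ 100 * M := by
    rw [hMeq]
    nlinarith
  have hMn : M ≤ n := by
    have : (M:ℝ) ≤ n := by rw [hMeq]; nlinarith
    exact_mod_cast this
  set θ : ℝ := (2:ℝ)^(-5:ℤ) * eh * n with hθ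
  set β : ℝ := 2 * Real.exp (-θ / 512) with hβ
  have hβ0 : 0 ≤ β := by rw [hβ]; positivity
  have hβδ : β = 2 * Real.exp (-(32 * δ)) := by
    rw [hβ, hθ, hδ]
    congr 2
    have h5 : (2:ℝ)^(-5:ℤ) = 1/32 := by norm_num
    have h19 : (2:ℝ)^(-19:ℤ) = 1/524288 := by norm_num
    rw [h5, h19]
    ring
  -- per-step measure bound
  have hstep : ∀ t : ℕ,
      μ {ω | θ < (U M G ω t : ℝ) ∧ (U M G ω (t+1) : ℝ) < (2:ℝ) ^ (-5:ℤ) * (U M G ω t)}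
        ≤ ENNReal.ofReal β := by
    intro t
    have hc := step_count n M t hn75 hM1 hMn θ
    rw [← hβ] at hc
    exact step_measure hdriver hn t θ β hβ0 hc
  by_cases hb0 : 0 ≤ b
  · set T := ⌊b⌋₊ with hT
    have hsub : {ω | ∀ t : ℕ, (t : ℝ) ≤ b →
          (2 : ℝ) ^ (-5 : ℤ) * ehat n (ε n) * n < (U M G ω t : ℝ) →
          (2 : ℝ) ^ (-5 : ℤ) * (U M G ω t : ℝ) ≤ (U M G ω (t + 1) : ℝ)}ᶜ ⊆
        ⋃ t ∈ Finset.range (T+1),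
          {ω | θ < (U M G ω t : ℝ) ∧ (U M G ω (t+1) : ℝ) < (2:ℝ) ^ (-5:ℤ) * (U M G ω t)} := by
      intro ω hω
      simp only [Set.mem_compl_iff, Set.mem_setOf_eq] at hω
      push_neg at hω
      obtain ⟨t, ht, h1, h2⟩ := hω
      have htT : t ∈ Finset.range (T+1) := by
        rw [Finset.mem_range, Nat.lt_succ_iff, hT]
        exact Nat.le_floor ht
      exact Set.mem_biUnion htT ⟨h1, h2⟩
    calc μ _ ≤ μ (⋃ t ∈ Finset.range (T+1),
          {ω | θ < (U M G ω t : ℝ) ∧ (U M G ω (t+1) : ℝ) < (2:ℝ) ^ (-5:ℤ) * (U M G ω t)}) :=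
        measure_mono hsub
      _ ≤ ∑ t ∈ Finset.range (T+1),
          μ {ω | θ < (U M G ω t : ℝ) ∧ (U M G ω (t+1) : ℝ) < (2:ℝ) ^ (-5:ℤ) * (U M G ω t)} :=
        measure_biUnion_finset_le _ _
      _ ≤ ∑ _t ∈ Finset.range (T+1), ENNReal.ofReal β := Finset.sum_le_sum (fun t _ => hstep t)
      _ = ((T:ℝ≥0∞)+1) * ENNReal.ofReal β := by
          rw [Finset.sum_const, Finset.card_range, nsmul_eq_mul]
          push_cast
          ring
      _ = ENNReal.ofReal (((T:ℝ)+1) * β) := by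
          have hcast : ((T:ℝ≥0∞)+1) = ENNReal.ofReal ((T:ℝ)+1) := by
            rw [ENNReal.ofReal_add (Nat.cast_nonneg T) zero_le_one, ENNReal.ofReal_natCast,
              ENNReal.ofReal_one]
          rw [hcast, ← ENNReal.ofReal_mul (by positivity)]
      _ ≤ ENNReal.ofReal (Real.exp (-((2 : ℝ) ^ (-19:ℤ) * ehat n (ε n) * n))) := by
          apply ENNReal.ofReal_le_ofReal
          have hTb : (T:ℝ) ≤ b := Nat.floor_le hb0
          rw [hβδ]
          exact finalArith T b δ hTb hb hδpos.le hlogδ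
  · have huniv : {ω | ∀ t : ℕ, (t : ℝ) ≤ b →
          (2 : ℝ) ^ (-5 : ℤ) * ehat n (ε n) * n < (U M G ω t : ℝ) →
          (2 : ℝ) ^ (-5 : ℤ) * (U M G ω t : ℝ) ≤ (U M G ω (t + 1) : ℝ)} = Set.univ := by
      apply Set.eq_univ_of_forall
      intro ω t ht
      exfalso
      have : (0:ℝ) ≤ (t:ℝ) := Nat.cast_nonneg t
      linarith
    rw [huniv, Set.compl_univ]
    simp

end Dispersion
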